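/- If there is a tree-like resolution derivation of a clause C of length L, then there is a tree-like merge resolution derivation of some clause C' ⊆ C of length at most L, i.e., a tree-like derivation in which every resolution step has at least one premise that is either an axiom or a merge. -/

import Mathlib

open Finset

abbrev Lit (V : Type) := V × Bool
abbrev Clause (V : Type) := Finset (Lit V)

def Lit.negate {V : Type} (l : Lit V) : Lit V := (l.1, !l.2)

/-- Justification of a proof line: `none` = axiom; `Sum.inl (i,j,x)` = resolution of
lines `i,j` on pivot variable `x`; `Sum.inr i` = weakening of line `i`. -/
abbrev Just (V : Type) := (ℕ × ℕ × V) ⊕ ℕ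

structure Deriv (V : Type) where
  lines : List (Clause V × Option (Just V))

namespace Deriv

variable {V : Type} [DecidableEq V]

def length (π : Deriv V) : ℕ := π.lines.length

def clause (π : Deriv V) (i : ℕ) : Clause V := (π.lines.getD i (∅, none)).1

def just (π : Deriv V) (i : ℕ) : Option (Just V) := (π.lines.getD i (∅, none)).2

def lastClause (π : Deriv V) : Clause V := π.clause (π.length - 1)

def resolve (A B : Clause V) (x : V) : Clause V := A.erase (x, true) ∪ B.erase (x, false)

def ValidLine (Ax : Set (Clause V)) (w : Bool) (π : Deriv V) (k : ℕ) : Prop :=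
  match π.just k with
  | none => π.clause k ∈ Ax
  | some (Sum.inl (i, j, x)) =>
      i < k ∧ j < k ∧ (x, true) ∈ π.clause i ∧ (x, false) ∈ π.clause j ∧
        π.clause k = resolve (π.clause i) (π.clause j) x
  | some (Sum.inr i) => w = true ∧ i < k ∧ π.clause i ⊆ π.clause k

/-- valid resolution derivation (no weakening) from axiom set `Ax` -/
def Valid (Ax : Set (Clause V)) (π : Deriv V) : Prop :=
  0 < π.length ∧ ∀ k < π.length, ValidLine Ax false π k

/-- valid resolution derivation with weakening allowed -/
def ValidW (Ax : Set (Clause V)) (π : Deriv V) : Prop :=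
  0 < π.length ∧ ∀ k < π.length, ValidLine Ax true π k

/-- line `k` is a resolution step whose two premises share a literal besides the pivot -/
def IsMergeLine (π : Deriv V) (k : ℕ) : Prop :=
  ∃ i j x, π.just k = some (Sum.inl (i, j, x)) ∧
    ∃ l, l ∈ (π.clause i).erase (x, true) ∧ l ∈ (π.clause j).erase (x, false)

def IsAxiomLine (π : Deriv V) (k : ℕ) : Prop := k < π.length ∧ π.just k = none

def IsParent (π : Deriv V) (i k : ℕ) : Prop :=
  (∃ j x, π.just k = some (Sum.inl (i, j, x)) ∨ π.just k = some (Sum.inl (j, i, x))) ∨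
    π.just k = some (Sum.inr i)

/-- reachability in the proof DAG -/
inductive Reaches (π : Deriv V) : ℕ → ℕ → Prop
  | refl (i : ℕ) : Reaches π i i
  | step {i j k : ℕ} : Reaches π i j → IsParent π j k → Reaches π i k

/-- the derivation uses the axiom clause `A`: some axiom line carries `A` and the final
line is reachable from it in the proof DAG -/
def UsesAxiom (π : Deriv V) (A : Clause V) : Prop :=
  ∃ i, IsAxiomLine π i ∧ π.clause i = A ∧ Reaches π i (π.length - 1)

/-- input derivation: every resolution step has at least one premise that is an axiom line -/
def Input (π : Deriv V) : Prop :=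
  ∀ k i j x, π.just k = some (Sum.inl (i, j, x)) → π.just i = none ∨ π.just j = none

/-- tree-like: every line is a premise of at most one line -/
def TreeLike (π : Deriv V) : Prop :=
  ∀ i k₁ k₂, IsParent π i k₁ → IsParent π i k₂ → k₁ = k₂

def vars (C : Clause V) : Finset V := C.image Prod.fst

/-- strongly regular: once a variable is used as pivot it never occurs in a later clause -/
def StronglyRegular (π : Deriv V) : Prop :=
  ∀ k i j x, π.just k = some (Sum.inl (i, j, x)) →
    ∀ k', k ≤ k' → k' < π.length → x ∉ vars (π.clause k')

/-- resolution with merge ancestors: every line used as a premise more than once has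
an ancestor in the proof DAG that is a merge -/
def RMA (π : Deriv V) : Prop :=
  ∀ i, (∃ k₁ k₂, k₁ ≠ k₂ ∧ IsParent π i k₁ ∧ IsParent π i k₂) →
    ∃ a, Reaches π a i ∧ IsMergeLine π a

end Deriv

def seqGet {V : Type} (S : List (Deriv V)) (t : ℕ) : Deriv V := S.getD t ⟨[]⟩

def seqLength {V : Type} (S : List (Deriv V)) : ℕ := (S.map Deriv.length).sum

/-- input-structured sequence over axiom set `Ax`: each constituent is a valid input
derivation which may use the final clauses (lemmas) of earlier constituents as axioms;
`w` tells whether weakening is allowed -/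
def SeqValid {V : Type} [DecidableEq V] (Ax : Set (Clause V)) (S : List (Deriv V))
    (w : Bool) : Prop :=
  S ≠ [] ∧ ∀ t < S.length,
    (cond w Deriv.ValidW Deriv.Valid)
        (Ax ∪ {C | ∃ t' < t, C = (seqGet S t').lastClause}) (seqGet S t) ∧
      (seqGet S t).Input

/-- every lemma (last clause of a non-final constituent) is derived by a merge step -/
def MergeLemmas {V : Type} [DecidableEq V] (S : List (Deriv V)) : Prop :=
  ∀ t, t + 1 < S.length → (seqGet S t).IsMergeLine ((seqGet S t).length - 1)

def LocallyRegular {V : Type} [DecidableEq V] (S : List (Deriv V)) : Prop :=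
  ∀ t < S.length, (seqGet S t).StronglyRegular

/-- every resolution step has a premise that is an axiom or a merge -/
def Deriv.MergeRes {V : Type} [DecidableEq V] (π : Deriv V) : Prop :=
  ∀ k i j x, π.just k = some (Sum.inl (i, j, x)) →
    (π.just i = none ∨ π.IsMergeLine i) ∨ (π.just j = none ∨ π.IsMergeLine j)

/-! ### Part 1: proof trees -/

section PTpart

variable {V : Type} [DecidableEq V]

inductive PT (V : Type) where
  | ax : Clause V → PT V
  | res : PT V → PT V → V → PT V

namespace PT

def clause [DecidableEq V] : PT V → Clause V
  | .ax C => C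
  | .res a b x => Deriv.resolve a.clause b.clause x

def size : PT V → ℕ
  | .ax _ => 1
  | .res a b _ => a.size + b.size + 1

def valid [DecidableEq V] (Ax : Set (Clause V)) : PT V → Prop
  | .ax C => C ∈ Ax
  | .res a b x => a.valid Ax ∧ b.valid Ax ∧ (x, true) ∈ a.clause ∧ (x, false) ∈ b.clause

/-- the root is an axiom or a merge -/
def good [DecidableEq V] : PT V → Prop
  | .ax _ => True
  | .res a b x => ∃ l, l ∈ a.clause.erase (x, true) ∧ l ∈ b.clause.erase (x, false)

def mres [DecidableEq V] : PT V → Prop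
  | .ax _ => True
  | .res a b _ => a.mres ∧ b.mres ∧ (a.good ∨ b.good)

lemma one_le_size (t : PT V) : 1 ≤ t.size := by
  cases t <;> simp [size]

end PT

lemma resolve_mono {A A' B B' : Clause V} {x : V} (hA : A ⊆ A') (hB : B ⊆ B') :
    Deriv.resolve A B x ⊆ Deriv.resolve A' B' x :=
  Finset.union_subset_union (Finset.erase_subset_erase _ hA) (Finset.erase_subset_erase _ hB)

/-- make a resolution node with pivot literal `(x, bb)` in the first tree -/
lemma mkRes {Ax : Set (Clause V)} (σ τ : PT V) (x : V) (bb : Bool)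
    (hσ : σ.valid Ax) (hτ : τ.valid Ax) (hmσ : σ.mres) (hmτ : τ.mres)
    (hg : σ.good ∨ τ.good)
    (h1 : (x, bb) ∈ σ.clause) (h2 : (x, !bb) ∈ τ.clause) :
    ∃ t : PT V, t.valid Ax ∧ t.mres ∧
      t.clause = σ.clause.erase (x, bb) ∪ τ.clause.erase (x, !bb) ∧
      t.size = σ.size + τ.size + 1 := by
  cases bb
  · -- pivot (x,false) in σ, (x,true) in τ : node res τ σ x
    refine ⟨.res τ σ x, ⟨hτ, hσ, by simpa using h2, by simpa using h1⟩,
      ⟨hmτ, hmσ, hg.symm⟩, ?_, by simp [PT.size]; omega⟩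
    simp only [PT.clause, Deriv.resolve]
    rw [Finset.union_comm]
    norm_num
  · refine ⟨.res σ τ x, ⟨hσ, hτ, by simpa using h1, by simpa using h2⟩,
      ⟨hmσ, hmτ, hg⟩, ?_, by simp [PT.size]⟩
    simp only [PT.clause, Deriv.resolve]
    norm_num

lemma combinePT {Ax : Set (Clause V)} :
    ∀ n (σ1 σ2 : PT V) (x : V) (bb : Bool), σ2.size ≤ n →
    σ1.valid Ax → σ2.valid Ax → σ1.mres → σ2.mres →
    (x, bb) ∈ σ1.clause → (x, !bb) ∈ σ2.clause →
    ∃ t : PT V, t.valid Ax ∧ t.mres ∧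
      t.clause ⊆ σ1.clause.erase (x, bb) ∪ σ2.clause.erase (x, !bb) ∧
      t.size ≤ σ1.size + σ2.size + 1 := by
  intro n
  induction n with
  | zero => intro σ1 σ2 _ _ hn; have := σ2.one_le_size; omega
  | succ n IH =>
    intro σ1 σ2 x bb hn hv1 hv2 hm1 hm2 hx1 hx2
    by_cases hg : σ1.good ∨ σ2.good
    · obtain ⟨t, h1, h2, h3, h4⟩ := mkRes σ1 σ2 x bb hv1 hv2 hm1 hm2 hg hx1 hx2
      exact ⟨t, h1, h2, h3.le, h4.le⟩
    push_neg at hg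
    obtain ⟨hg1, hg2⟩ := hg
    cases σ2 with
    | ax C => exact absurd trivial hg2
    | res M N w =>
      obtain ⟨hvM, hvN, hwM, hwN⟩ := hv2
      obtain ⟨hmM, hmN, hgMN⟩ := hm2
      have hsM : M.size ≤ n := by have := N.one_le_size; simp [PT.size] at hn; omega
      have hsN : N.size ≤ n := by have := M.one_le_size; simp [PT.size] at hn; omega
      have hdisj : ∀ u, u ∈ M.clause.erase (w, true) → u ∉ N.clause.erase (w, false) := by
        intro u hu hu'
        exact hg2 ⟨u, hu, hu'⟩
      have hx2' : (x, !bb) ∈ M.clause.erase (w, true) ∪ N.clause.erase (w, false) := hx2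
      rw [Finset.mem_union] at hx2'
      -- target clause
      set T := σ1.clause.erase (x, bb) ∪
        (PT.res M N w).clause.erase (x, !bb) with hT
      have hMT : ∀ u, u ∈ M.clause → u ≠ (w, true) → u ≠ (x, !bb) → u ∈ T := by
        intro u hu h1 h2
        exact Finset.mem_union_right _ (Finset.mem_erase.2 ⟨h2,
          Finset.mem_union_left _ (Finset.mem_erase.2 ⟨h1, hu⟩)⟩)
      have hNT : ∀ u, u ∈ N.clause → u ≠ (w, false) → u ≠ (x, !bb) → u ∈ T := by
        intro u hu h1 h2
        exact Finset.mem_union_right _ (Finset.mem_erase.2 ⟨h2,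
          Finset.mem_union_right _ (Finset.mem_erase.2 ⟨h1, hu⟩)⟩)
      have hσT : ∀ u, u ∈ σ1.clause.erase (x, bb) → u ∈ T := fun u hu =>
        Finset.mem_union_left _ hu
      rcases hx2' with hM | hN
      · -- (x,!bb) in the M part
        have hnN : (x, !bb) ∉ N.clause.erase (w, false) := hdisj _ hM
        have hxM : (x, !bb) ∈ M.clause := (Finset.mem_erase.1 hM).2
        have hxw : (x, !bb) ≠ (w, true) := (Finset.mem_erase.1 hM).1
        rcases hgMN with hgM | hgN
        · -- M good: build res(σ1, M) on x, then combine with N on (w,true)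
          obtain ⟨D, hvD, hmD, hcD, hsD⟩ :=
            mkRes σ1 M x bb hv1 hvM hm1 hmM (Or.inr hgM) hx1 hxM
          have hwD : (w, true) ∈ D.clause := by
            rw [hcD]
            exact Finset.mem_union_right _ (Finset.mem_erase.2 ⟨Ne.symm hxw, hwM⟩)
          obtain ⟨t, hvt, hmt, hct, hst⟩ :=
            IH D N w true hsN hvD hvN hmD hmN hwD (by simpa using hwN)
          refine ⟨t, hvt, hmt, ?_, by simp [PT.size] at *; omega⟩
          intro u hu
          rcases Finset.mem_union.1 (hct hu) with h | h
          · obtain ⟨huw, hu'⟩ := Finset.mem_erase.1 h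
            rw [hcD] at hu'
            rcases Finset.mem_union.1 hu' with h' | h'
            · exact hσT u h'
            · obtain ⟨h2, h3⟩ := Finset.mem_erase.1 h'
              exact hMT u h3 huw h2
          · obtain ⟨huw, hu'⟩ := Finset.mem_erase.1 h
            refine hNT u hu' huw ?_
            intro he
            exact hnN (Finset.mem_erase.2 ⟨he ▸ huw, he ▸ hu'⟩)
        · -- N good: combine σ1 with M on x first
          obtain ⟨R, hvR, hmR, hcR, hsR⟩ :=
            IH σ1 M x bb hsM hv1 hvM hm1 hmM hx1 hxM
          by_cases hw : (w, true) ∈ R.clause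
          · -- resolve R with N on w
            obtain ⟨t, hvt, hmt, hct, hst⟩ :=
              mkRes R N w true hvR hvN hmR hmN (Or.inr hgN) hw (by simpa using hwN)
            refine ⟨t, hvt, hmt, ?_, by simp [PT.size] at *; omega⟩
            rw [hct]
            intro u hu
            rcases Finset.mem_union.1 hu with h | h
            · obtain ⟨huw, hu'⟩ := Finset.mem_erase.1 h
              rcases Finset.mem_union.1 (hcR hu') with h' | h'
              · exact hσT u h'
              · obtain ⟨h2, h3⟩ := Finset.mem_erase.1 h'
                exact hMT u h3 (by simpa using huw) h2
            · obtain ⟨huw, hu'⟩ := Finset.mem_erase.1 h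
              refine hNT u hu' huw ?_
              intro he
              exact hnN (Finset.mem_erase.2 ⟨he ▸ huw, he ▸ hu'⟩)
          · -- w+ already gone : R suffices
            refine ⟨R, hvR, hmR, ?_, by simp [PT.size] at *; omega⟩
            intro u hu
            rcases Finset.mem_union.1 (hcR hu) with h | h
            · exact hσT u h
            · obtain ⟨h2, h3⟩ := Finset.mem_erase.1 h
              exact hMT u h3 (fun he => hw (he ▸ hu)) h2
      · -- (x,!bb) in the N part
        have hnM : (x, !bb) ∉ M.clause.erase (w, true) := fun h => hdisj _ h hN
        have hxN : (x, !bb) ∈ N.clause := (Finset.mem_erase.1 hN).2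
        have hxw : (x, !bb) ≠ (w, false) := (Finset.mem_erase.1 hN).1
        rcases hgMN with hgM | hgN
        · -- M good: combine σ1 with N on x first
          obtain ⟨R, hvR, hmR, hcR, hsR⟩ :=
            IH σ1 N x bb hsN hv1 hvN hm1 hmN hx1 hxN
          by_cases hw : (w, false) ∈ R.clause
          · -- resolve M with R on w (pivot literal (w,true) in M)
            obtain ⟨t, hvt, hmt, hct, hst⟩ :=
              mkRes M R w true hvM hvR hmM hmR (Or.inl hgM) hwM (by simpa using hw)
            refine ⟨t, hvt, hmt, ?_, by simp [PT.size] at *; omega⟩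
            rw [hct]
            intro u hu
            rcases Finset.mem_union.1 hu with h | h
            · obtain ⟨huw, hu'⟩ := Finset.mem_erase.1 h
              refine hMT u hu' huw ?_
              intro he
              exact hnM (Finset.mem_erase.2 ⟨he ▸ huw, he ▸ hu'⟩)
            · obtain ⟨huw, hu'⟩ := Finset.mem_erase.1 h
              rcases Finset.mem_union.1 (hcR hu') with h' | h'
              · exact hσT u h'
              · obtain ⟨h2, h3⟩ := Finset.mem_erase.1 h'
                exact hNT u h3 (by simpa using huw) h2
          · refine ⟨R, hvR, hmR, ?_, by simp [PT.size] at *; omega⟩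
            intro u hu
            rcases Finset.mem_union.1 (hcR hu) with h | h
            · exact hσT u h
            · obtain ⟨h2, h3⟩ := Finset.mem_erase.1 h
              exact hNT u h3 (fun he => hw (he ▸ hu)) h2
        · -- N good: build res(σ1, N) on x, then combine with M on (w,false)
          obtain ⟨D, hvD, hmD, hcD, hsD⟩ :=
            mkRes σ1 N x bb hv1 hvN hm1 hmN (Or.inr hgN) hx1 hxN
          have hwD : (w, false) ∈ D.clause := by
            rw [hcD]
            exact Finset.mem_union_right _ (Finset.mem_erase.2 ⟨Ne.symm hxw, hwN⟩)
          obtain ⟨t, hvt, hmt, hct, hst⟩ :=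
            IH D M w false hsM hvD hvM hmD hmM hwD (by simpa using hwM)
          refine ⟨t, hvt, hmt, ?_, by simp [PT.size] at *; omega⟩
          intro u hu
          rcases Finset.mem_union.1 (hct hu) with h | h
          · obtain ⟨huw, hu'⟩ := Finset.mem_erase.1 h
            rw [hcD] at hu'
            rcases Finset.mem_union.1 hu' with h' | h'
            · exact hσT u h'
            · obtain ⟨h2, h3⟩ := Finset.mem_erase.1 h'
              exact hNT u h3 huw h2
          · obtain ⟨huw, hu'⟩ := Finset.mem_erase.1 h
            refine hMT u hu' huw ?_
            intro he
            exact hnM (Finset.mem_erase.2 ⟨he ▸ huw, he ▸ hu'⟩)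

/-- main PT-level result -/
lemma ptMain {Ax : Set (Clause V)} :
    ∀ t : PT V, t.valid Ax →
    ∃ t' : PT V, t'.valid Ax ∧ t'.mres ∧ t'.clause ⊆ t.clause ∧ t'.size ≤ t.size := by
  intro t
  induction t with
  | ax C => exact fun h => ⟨.ax C, h, trivial, le_refl _, le_refl _⟩
  | res a b x IHa IHb =>
    rintro ⟨hva, hvb, hxa, hxb⟩
    obtain ⟨a', hva', hma', hca', hsa'⟩ := IHa hva
    obtain ⟨b', hvb', hmb', hcb', hsb'⟩ := IHb hvb
    have hsub1 : a.clause.erase (x, true) ∪ b.clause.erase (x, false) =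
        (PT.res a b x).clause := rfl
    by_cases h1 : (x, true) ∈ a'.clause
    · by_cases h2 : (x, false) ∈ b'.clause
      · obtain ⟨t, hvt, hmt, hct, hst⟩ :=
          combinePT b'.size a' b' x true (le_refl _) hva' hvb' hma' hmb' h1 (by simpa using h2)
        refine ⟨t, hvt, hmt, ?_, by simp [PT.size]; omega⟩
        refine hct.trans ?_
        rw [← hsub1]
        exact Finset.union_subset_union (Finset.erase_subset_erase _ hca')
          (by simpa using Finset.erase_subset_erase (x, false) hcb')
      · refine ⟨b', hvb', hmb', ?_, by simp [PT.size]; omega⟩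
        intro u hu
        rw [← hsub1]
        exact Finset.mem_union_right _ (Finset.mem_erase.2 ⟨fun he => h2 (he ▸ hu), hcb' hu⟩)
    · refine ⟨a', hva', hma', ?_, by simp [PT.size]; omega⟩
      intro u hu
      rw [← hsub1]
      exact Finset.mem_union_left _ (Finset.mem_erase.2 ⟨fun he => h1 (he ▸ hu), hca' hu⟩)

end PTpart

/-! ### Part 2: extracting a proof tree from a tree-like derivation -/

section ExtPart

variable {V : Type} [DecidableEq V] {Ax : Set (Clause V)} {π : Deriv V}

open Deriv

lemma just_eq_none_of_le {π : Deriv V} {k : ℕ} (h : π.length ≤ k) : π.just k = none := by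
  unfold Deriv.just
  rw [List.getD_eq_default]
  exact h

lemma parent_lt (hv : π.Valid Ax) {a k : ℕ} (hp : π.IsParent a k) :
    k < π.length ∧ a < k := by
  have hk : k < π.length := by
    by_contra h
    push_neg at h
    have := just_eq_none_of_le h
    rcases hp with ⟨j, x, h' | h'⟩ | h' <;> simp_all
  refine ⟨hk, ?_⟩
  have hvl := hv.2 k hk
  unfold ValidLine at hvl
  rcases hp with ⟨j, x, h' | h'⟩ | h' <;> rw [h'] at hvl <;> simp_all

lemma reaches_le (hv : π.Valid Ax) {a b : ℕ} (h : π.Reaches a b) : a ≤ b := by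
  induction h with
  | refl => exact le_refl _
  | step _ hp IH => exact IH.trans (parent_lt hv hp).2.le

lemma reaches_peel {a b : ℕ} (h : π.Reaches a b) :
    a = b ∨ ∃ c, π.IsParent a c ∧ π.Reaches c b := by
  induction h with
  | refl => exact Or.inl rfl
  | step _ hp IH =>
    rcases IH with rfl | ⟨c, hc, hr⟩
    · exact Or.inr ⟨_, hp, .refl _⟩
    · exact Or.inr ⟨c, hc, hr.step hp⟩

lemma reaches_compare (ht : π.TreeLike) {k a b : ℕ} (ha : π.Reaches k a)
    (hb : π.Reaches k b) : π.Reaches a b ∨ π.Reaches b a := by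
  induction hb with
  | refl => exact Or.inr ha
  | step hb' hp IH =>
    rcases IH with h | h
    · exact Or.inl (h.step hp)
    · rcases reaches_peel h with rfl | ⟨c, hc, hr⟩
      · exact Or.inl ((Deriv.Reaches.refl _).step hp)
      · rw [ht _ _ _ hc hp] at hr
        exact Or.inr hr

open Classical in
noncomputable def anc (π : Deriv V) (i : ℕ) : Finset ℕ :=
  (Finset.range (i + 1)).filter (fun j => π.Reaches j i)

lemma mem_anc {i j : ℕ} : j ∈ anc π i ↔ j < i + 1 ∧ π.Reaches j i := by
  simp [anc]

lemma anc_card_le (π : Deriv V) (i : ℕ) : (anc π i).card ≤ i + 1 := by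
  classical
  calc (anc π i).card ≤ (Finset.range (i + 1)).card := by
        apply Finset.card_le_card
        intro j hj
        exact Finset.mem_range.2 (mem_anc.1 hj).1
    _ = i + 1 := Finset.card_range _

lemma self_mem_anc (i : ℕ) : i ∈ anc π i := mem_anc.2 ⟨by omega, .refl _⟩

lemma anc_subset (hv : π.Valid Ax) {a i : ℕ} (hp : π.IsParent a i) :
    anc π a ⊆ anc π i := by
  intro j hj
  rw [mem_anc] at *
  have := (parent_lt hv hp).2
  exact ⟨by omega, hj.2.step hp⟩

lemma anc_disjoint (hv : π.Valid Ax) (ht : π.TreeLike) {a b i : ℕ}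
    (hi : i < π.length) (ha : π.IsParent a i) (hb : π.IsParent b i) (hab : a ≠ b) :
    ∀ j, j ∈ anc π a → j ∉ anc π b := by
  have key : ∀ u v : ℕ, u ≠ v → π.IsParent u i → π.IsParent v i → ¬ π.Reaches u v := by
    intro u v huv hu hvp hr
    rcases reaches_peel hr with rfl | ⟨c, hc, hr'⟩
    · exact huv rfl
    · rw [ht _ _ _ hc hu] at hr'
      have h1 := reaches_le hv hr'
      have h2 := (parent_lt hv hvp).2
      omega
  intro j hja hjb
  rw [mem_anc] at hja hjb
  rcases reaches_compare ht hja.2 hjb.2 with h | h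
  · exact key a b hab ha hb h
  · exact key b a (Ne.symm hab) hb ha h

lemma extractPT (hv : π.Valid Ax) (ht : π.TreeLike) :
    ∀ i < π.length, ∃ t : PT V, t.valid Ax ∧ t.clause ⊆ π.clause i ∧
      t.size ≤ (anc π i).card := by
  intro i
  induction i using Nat.strong_induction_on with
  | _ i IH =>
    intro hi
    have hcard : 1 ≤ (anc π i).card := Finset.card_pos.2 ⟨i, self_mem_anc i⟩
    have hvl := hv.2 i hi
    unfold Deriv.ValidLine at hvl
    cases hj : π.just i with
    | none =>
      rw [hj] at hvl
      exact ⟨.ax (π.clause i), hvl, Finset.Subset.refl _, by simpa [PT.size] using hcard⟩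
    | some js =>
      cases js with
      | inr m => rw [hj] at hvl; simp at hvl
      | inl t3 =>
        obtain ⟨a, b, x⟩ := t3
        rw [hj] at hvl
        obtain ⟨hai, hbi, hxa, hxb, hres⟩ := hvl
        have hpa : π.IsParent a i := Or.inl ⟨b, x, Or.inl hj⟩
        have hpb : π.IsParent b i := Or.inl ⟨a, x, Or.inr hj⟩
        obtain ⟨ta, hvta, hcta, hsta⟩ := IH a hai (hai.trans hi)
        obtain ⟨tb, hvtb, hctb, hstb⟩ := IH b hbi (hbi.trans hi)
        have hsuba : anc π a ⊆ anc π i := anc_subset hv hpa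
        have hsubb : anc π b ⊆ anc π i := anc_subset hv hpb
        by_cases hab : a = b
        · subst hab
          refine ⟨ta, hvta, ?_, hsta.trans (Finset.card_le_card hsuba)⟩
          refine hcta.trans ?_
          rw [hres]
          intro u hu
          unfold Deriv.resolve
          by_cases hux : u = (x, true)
          · exact Finset.mem_union_right _ (Finset.mem_erase.2 ⟨by simp [hux], hux ▸ hu⟩)
          · exact Finset.mem_union_left _ (Finset.mem_erase.2 ⟨hux, hu⟩)
        · have hdisj := anc_disjoint hv ht hi hpa hpb hab
          have hnion : anc π a ∪ anc π b ⊆ (anc π i).erase i := by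
            intro j hjm
            refine Finset.mem_erase.2 ⟨?_, ?_⟩
            · rintro rfl
              rcases Finset.mem_union.1 hjm with h | h <;>
                · have := reaches_le hv (mem_anc.1 h).2
                  omega
            · rcases Finset.mem_union.1 hjm with h | h
              · exact hsuba h
              · exact hsubb h
          have hcards : (anc π a).card + (anc π b).card + 1 ≤ (anc π i).card := by
            have h1 : (anc π a ∪ anc π b).card = (anc π a).card + (anc π b).card := by
              rw [Finset.card_union_of_disjoint]
              exact Finset.disjoint_left.2 fun {j} hja hjb => hdisj j hja hjb
            have h2 := Finset.card_le_card hnion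
            rw [Finset.card_erase_of_mem (self_mem_anc i)] at h2
            omega
          by_cases h1 : (x, true) ∈ ta.clause
          · by_cases h2 : (x, false) ∈ tb.clause
            · refine ⟨.res ta tb x, ⟨hvta, hvtb, h1, h2⟩, ?_, ?_⟩
              · rw [hres]
                exact resolve_mono hcta hctb
              · simp only [PT.size]
                omega
            · refine ⟨tb, hvtb, ?_, ?_⟩
              · intro u hu
                rw [hres]
                exact Finset.mem_union_right _
                  (Finset.mem_erase.2 ⟨fun he => h2 (he ▸ hu), hctb hu⟩)
              · have := Finset.card_le_card hsubb; omega
          · refine ⟨ta, hvta, ?_, ?_⟩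
            · intro u hu
              rw [hres]
              exact Finset.mem_union_left _
                (Finset.mem_erase.2 ⟨fun he => h1 (he ▸ hu), hcta hu⟩)
            · have := Finset.card_le_card hsuba; omega

end ExtPart

/-! ### Part 3: converting proof trees back to derivations -/

section GluePart

variable {V : Type} [DecidableEq V]

def shiftJ (n : ℕ) : Just V → Just V
  | Sum.inl (i, j, x) => Sum.inl (i + n, j + n, x)
  | Sum.inr i => Sum.inr (i + n)

def shiftD (n : ℕ) (π : Deriv V) : Deriv V :=
  ⟨π.lines.map (fun p => (p.1, p.2.map (shiftJ n)))⟩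

def glue (π1 π2 : Deriv V) (x : V) : Deriv V :=
  ⟨π1.lines ++ (shiftD π1.length π2).lines ++
    [(Deriv.resolve π1.lastClause π2.lastClause x,
      some (Sum.inl (π1.length - 1, π1.length + π2.length - 1, x)))]⟩

variable {π1 π2 : Deriv V} {x : V} {Ax : Set (Clause V)}

lemma shiftD_length (n : ℕ) (π : Deriv V) : (shiftD n π).length = π.length :=
  List.length_map _

lemma shiftD_clause (n : ℕ) (π : Deriv V) (k : ℕ) : (shiftD n π).clause k = π.clause k := by
  unfold Deriv.clause shiftD
  rw [List.getD_eq_getElem?_getD, List.getD_eq_getElem?_getD, List.getElem?_map]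
  cases π.lines[k]? <;> simp

lemma shiftD_just (n : ℕ) (π : Deriv V) (k : ℕ) :
    (shiftD n π).just k = (π.just k).map (shiftJ n) := by
  unfold Deriv.just shiftD
  rw [List.getD_eq_getElem?_getD, List.getD_eq_getElem?_getD, List.getElem?_map]
  cases π.lines[k]? <;> simp

lemma glue_length : (glue π1 π2 x).length = π1.length + π2.length + 1 := by
  simp [glue, Deriv.length, shiftD]
  omega

lemma glue_line_lo {k : ℕ} (hk : k < π1.length) :
    (glue π1 π2 x).lines.getD k (∅, none) = π1.lines.getD k (∅, none) := by
  unfold glue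
  rw [List.getD_append _ _ _ _ (by simp [shiftD, Deriv.length] at *; omega),
    List.getD_append _ _ _ _ hk]

lemma glue_clause_lo {k : ℕ} (hk : k < π1.length) :
    (glue π1 π2 x).clause k = π1.clause k := by
  unfold Deriv.clause; rw [glue_line_lo hk]

lemma glue_just_lo {k : ℕ} (hk : k < π1.length) :
    (glue π1 π2 x).just k = π1.just k := by
  unfold Deriv.just; rw [glue_line_lo hk]

lemma glue_line_mid {k : ℕ} (hk : k < π2.length) :
    (glue π1 π2 x).lines.getD (π1.length + k) (∅, none) =
      (shiftD π1.length π2).lines.getD k (∅, none) := by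
  unfold glue
  rw [List.getD_append _ _ _ _ (by simp [shiftD, Deriv.length] at *; omega),
    List.getD_append_right _ _ _ _ (by simp [Deriv.length])]
  congr 1
  simp [Deriv.length]

lemma glue_clause_mid {k : ℕ} (hk : k < π2.length) :
    (glue π1 π2 x).clause (π1.length + k) = π2.clause k := by
  have h1 : (glue π1 π2 x).clause (π1.length + k) = (shiftD π1.length π2).clause k := by
    unfold Deriv.clause; rw [glue_line_mid hk]
  rw [h1, shiftD_clause]

lemma glue_just_mid {k : ℕ} (hk : k < π2.length) :
    (glue π1 π2 x).just (π1.length + k) = (π2.just k).map (shiftJ π1.length) := by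
  have h1 : (glue π1 π2 x).just (π1.length + k) = (shiftD π1.length π2).just k := by
    unfold Deriv.just; rw [glue_line_mid hk]
  rw [h1, shiftD_just]

lemma glue_line_last :
    (glue π1 π2 x).lines.getD (π1.length + π2.length) (∅, none) =
      (Deriv.resolve π1.lastClause π2.lastClause x,
        some (Sum.inl (π1.length - 1, π1.length + π2.length - 1, x))) := by
  unfold glue
  rw [List.getD_append_right _ _ _ _ (by simp [shiftD, Deriv.length])]
  simp [shiftD, Deriv.length]

lemma glue_clause_last :
    (glue π1 π2 x).clause (π1.length + π2.length) =
      Deriv.resolve π1.lastClause π2.lastClause x := by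
  unfold Deriv.clause; rw [glue_line_last]

lemma glue_just_last :
    (glue π1 π2 x).just (π1.length + π2.length) =
      some (Sum.inl (π1.length - 1, π1.length + π2.length - 1, x)) := by
  unfold Deriv.just; rw [glue_line_last]

lemma glue_lastClause :
    (glue π1 π2 x).lastClause = Deriv.resolve π1.lastClause π2.lastClause x := by
  unfold Deriv.lastClause
  rw [glue_length]
  simpa [Deriv.lastClause] using glue_clause_last

lemma no_inr (hv : π1.Valid Ax) (k i : ℕ) : π1.just k ≠ some (Sum.inr i) := by
  intro h
  by_cases hk : k < π1.length
  · have := hv.2 k hk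
    unfold Deriv.ValidLine at this
    rw [h] at this
    simp at this
  · rw [just_eq_none_of_le (by omega)] at h
    exact absurd h (by simp)

lemma glue_valid (hv1 : π1.Valid Ax) (hv2 : π2.Valid Ax)
    (hx1 : (x, true) ∈ π1.lastClause) (hx2 : (x, false) ∈ π2.lastClause) :
    (glue π1 π2 x).Valid Ax := by
  have hL1 := hv1.1
  have hL2 := hv2.1
  constructor
  · rw [glue_length]; omega
  intro k hk
  rw [glue_length] at hk
  rcases Nat.lt_or_ge k π1.length with h1 | h1
  · -- low region
    have hv := hv1.2 k h1
    unfold Deriv.ValidLine at hv ⊢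
    rw [glue_just_lo h1]
    cases hj : π1.just k with
    | none =>
      rw [hj] at hv
      rwa [glue_clause_lo h1]
    | some js =>
      rw [hj] at hv
      cases js with
      | inr m => simp at hv
      | inl t3 =>
        obtain ⟨i, j, y⟩ := t3
        obtain ⟨h2, h3, h4, h5, h6⟩ := hv
        exact ⟨h2, h3, by rwa [glue_clause_lo (h2.trans h1)],
          by rwa [glue_clause_lo (h3.trans h1)],
          by rw [glue_clause_lo h1, glue_clause_lo (h2.trans h1), glue_clause_lo (h3.trans h1)];
             exact h6⟩
  rcases Nat.lt_or_ge k (π1.length + π2.length) with h2 | h2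
  · -- middle region
    obtain ⟨k0, rfl⟩ : ∃ k0, k = π1.length + k0 := ⟨k - π1.length, by omega⟩
    have hk0 : k0 < π2.length := by omega
    have hv := hv2.2 k0 hk0
    unfold Deriv.ValidLine at hv ⊢
    rw [glue_just_mid hk0]
    cases hj : π2.just k0 with
    | none =>
      rw [hj] at hv
      rw [Option.map_none]
      rwa [glue_clause_mid hk0]
    | some js =>
      rw [hj] at hv
      cases js with
      | inr m => simp at hv
      | inl t3 =>
        obtain ⟨i, j, y⟩ := t3
        obtain ⟨h3, h4, h5, h6, h7⟩ := hv
        rw [Option.map_some]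
        simp only [shiftJ]
        refine ⟨by omega, by omega, ?_, ?_, ?_⟩
        · show (y, true) ∈ (glue π1 π2 x).clause (i + π1.length)
          rw [Nat.add_comm i π1.length, glue_clause_mid (by omega)]
          exact h5
        · show (y, false) ∈ (glue π1 π2 x).clause (j + π1.length)
          rw [Nat.add_comm j π1.length, glue_clause_mid (by omega)]
          exact h6
        · rw [glue_clause_mid hk0, Nat.add_comm i π1.length, Nat.add_comm j π1.length,
            glue_clause_mid (by omega), glue_clause_mid (by omega)]
          exact h7
  have h3 : k = π1.length + π2.length := by omega
  subst h3
  -- last line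
  unfold Deriv.ValidLine
  rw [glue_just_last]
  refine ⟨by omega, by omega, ?_, ?_, ?_⟩
  · rw [glue_clause_lo (by omega)]
    exact hx1
  · rw [show π1.length + π2.length - 1 = π1.length + (π2.length - 1) by omega,
      glue_clause_mid (by omega)]
    exact hx2
  · rw [glue_clause_last, glue_clause_lo (by omega),
      show π1.length + π2.length - 1 = π1.length + (π2.length - 1) by omega,
      glue_clause_mid (by omega)]
    rfl

lemma glue_parent (hv1 : π1.Valid Ax) (hv2 : π2.Valid Ax) {a k : ℕ}
    (hp : (glue π1 π2 x).IsParent a k) :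
    (k < π1.length ∧ π1.IsParent a k ∧ a < k) ∨
    (π1.length ≤ k ∧ k < π1.length + π2.length ∧ π1.length ≤ a ∧ a < k ∧
      π2.IsParent (a - π1.length) (k - π1.length)) ∨
    (k = π1.length + π2.length ∧ (a = π1.length - 1 ∨ a = π1.length + π2.length - 1)) := by
  have hL1 := hv1.1
  have hL2 := hv2.1
  by_cases hk4 : π1.length + π2.length + 1 ≤ k
  · have : (glue π1 π2 x).just k = none := just_eq_none_of_le (by rwa [glue_length])
    rcases hp with ⟨j, y, h | h⟩ | h <;> simp_all
  push_neg at hk4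
  rcases Nat.lt_or_ge k π1.length with h1 | h1
  · left
    have hj : (glue π1 π2 x).just k = π1.just k := glue_just_lo h1
    have hp1 : π1.IsParent a k := by
      rcases hp with ⟨j, y, h | h⟩ | h
      · exact Or.inl ⟨j, y, Or.inl (hj ▸ h)⟩
      · exact Or.inl ⟨j, y, Or.inr (hj ▸ h)⟩
      · exact Or.inr (hj ▸ h)
    exact ⟨h1, hp1, (parent_lt hv1 hp1).2⟩
  rcases Nat.lt_or_ge k (π1.length + π2.length) with h2 | h2
  · right; left
    obtain ⟨k0, rfl⟩ : ∃ k0, k = π1.length + k0 := ⟨k - π1.length, by omega⟩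
    have hk0 : k0 < π2.length := by omega
    have hj : (glue π1 π2 x).just (π1.length + k0) = (π2.just k0).map (shiftJ π1.length) :=
      glue_just_mid hk0
    have key : ∃ a0, a = a0 + π1.length ∧ π2.IsParent a0 k0 := by
      rcases hp with ⟨j, y, h | h⟩ | h
      · rw [hj] at h
        cases hj0 : π2.just k0 with
        | none => rw [hj0] at h; exact absurd h (by simp)
        | some js =>
          rw [hj0] at h
          cases js with
          | inl t3 =>
            obtain ⟨i0, j0, y0⟩ := t3
            simp only [Option.map_some, shiftJ, Option.some.injEq, Sum.inl.injEq,
              Prod.mk.injEq] at h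
            exact ⟨i0, h.1.symm, Or.inl ⟨j0, y0, Or.inl hj0⟩⟩
          | inr m => simp [shiftJ] at h
      · rw [hj] at h
        cases hj0 : π2.just k0 with
        | none => rw [hj0] at h; exact absurd h (by simp)
        | some js =>
          rw [hj0] at h
          cases js with
          | inl t3 =>
            obtain ⟨i0, j0, y0⟩ := t3
            simp only [Option.map_some, shiftJ, Option.some.injEq, Sum.inl.injEq,
              Prod.mk.injEq] at h
            exact ⟨j0, h.2.1.symm, Or.inl ⟨i0, y0, Or.inr hj0⟩⟩
          | inr m => simp [shiftJ] at h
      · rw [hj] at h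
        cases hj0 : π2.just k0 with
        | none => rw [hj0] at h; exact absurd h (by simp)
        | some js =>
          rw [hj0] at h
          cases js with
          | inl t3 => obtain ⟨i0, j0, y0⟩ := t3; simp [shiftJ] at h
          | inr m =>
            simp only [Option.map_some, shiftJ, Option.some.injEq, Sum.inr.injEq] at h
            exact ⟨m, h.symm, Or.inr hj0⟩
    obtain ⟨a0, rfl, hpa⟩ := key
    have := (parent_lt hv2 hpa).2
    refine ⟨by omega, by omega, by omega, by omega, ?_⟩
    rw [show a0 + π1.length - π1.length = a0 by omega,
      show π1.length + k0 - π1.length = k0 by omega]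
    exact hpa
  have h2' : k = π1.length + π2.length := by omega
  subst h2'
  right; right
  refine ⟨rfl, ?_⟩
  have hj := glue_just_last (π1 := π1) (π2 := π2) (x := x)
  rcases hp with ⟨j, y, h | h⟩ | h
  · rw [hj] at h
    simp only [Option.some.injEq, Sum.inl.injEq, Prod.mk.injEq] at h
    exact Or.inl h.1.symm
  · rw [hj] at h
    simp only [Option.some.injEq, Sum.inl.injEq, Prod.mk.injEq] at h
    exact Or.inr h.2.1.symm
  · rw [hj] at h
    exact absurd h (by simp)

lemma glue_treelike (hv1 : π1.Valid Ax) (hv2 : π2.Valid Ax)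
    (ht1 : π1.TreeLike) (ht2 : π2.TreeLike) : (glue π1 π2 x).TreeLike := by
  have hL1 := hv1.1
  have hL2 := hv2.1
  intro a k1 k2 hp1 hp2
  rcases glue_parent hv1 hv2 hp1 with ⟨hk1, hq1, ha1⟩ | ⟨hak1, hk1, haL1, ha1, hq1⟩ | ⟨hk1, ha1⟩ <;>
    rcases glue_parent hv1 hv2 hp2 with ⟨hk2, hq2, ha2⟩ | ⟨hak2, hk2, haL2, ha2, hq2⟩ | ⟨hk2, ha2⟩
  · exact ht1 _ _ _ hq1 hq2
  · omega
  · omega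
  · omega
  · have := ht2 _ _ _ hq1 hq2; omega
  · omega
  · omega
  · omega
  · omega

end GluePart

section ConvPart

variable {V : Type} [DecidableEq V] {π1 π2 : Deriv V} {x : V} {Ax : Set (Clause V)}

/-- the last line is an axiom or a merge -/
def goodD (π : Deriv V) : Prop :=
  π.just (π.length - 1) = none ∨ π.IsMergeLine (π.length - 1)

lemma merge_lo (hv1 : π1.Valid Ax) {k : ℕ} (h : π1.IsMergeLine k) :
    (glue π1 π2 x).IsMergeLine k := by
  obtain ⟨i, j, y, hj, l, hl1, hl2⟩ := h
  have hk : k < π1.length := by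
    by_contra hk
    rw [just_eq_none_of_le (by omega)] at hj
    exact absurd hj (by simp)
  have hvl := hv1.2 k hk
  unfold Deriv.ValidLine at hvl
  rw [hj] at hvl
  exact ⟨i, j, y, by rw [glue_just_lo hk]; exact hj,
    l, by rwa [glue_clause_lo (by omega)], by rwa [glue_clause_lo (by omega)]⟩

lemma merge_mid (hv2 : π2.Valid Ax) {k : ℕ} (h : π2.IsMergeLine k) :
    (glue π1 π2 x).IsMergeLine (π1.length + k) := by
  obtain ⟨i, j, y, hj, l, hl1, hl2⟩ := h
  have hk : k < π2.length := by
    by_contra hk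
    rw [just_eq_none_of_le (by omega)] at hj
    exact absurd hj (by simp)
  have hvl := hv2.2 k hk
  unfold Deriv.ValidLine at hvl
  rw [hj] at hvl
  refine ⟨i + π1.length, j + π1.length, y, ?_, l, ?_, ?_⟩
  · rw [glue_just_mid hk, hj]
    simp [shiftJ]
  · rwa [Nat.add_comm i π1.length, glue_clause_mid (by omega)]
  · rwa [Nat.add_comm j π1.length, glue_clause_mid (by omega)]

lemma merge_last (hv1 : π1.Valid Ax) (hv2 : π2.Valid Ax)
    (h : ∃ l, l ∈ π1.lastClause.erase (x, true) ∧ l ∈ π2.lastClause.erase (x, false)) :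
    (glue π1 π2 x).IsMergeLine (π1.length + π2.length) := by
  have hL1 := hv1.1
  have hL2 := hv2.1
  obtain ⟨l, hl1, hl2⟩ := h
  refine ⟨π1.length - 1, π1.length + π2.length - 1, x, glue_just_last, l, ?_, ?_⟩
  · rwa [glue_clause_lo (by omega)]
  · rw [show π1.length + π2.length - 1 = π1.length + (π2.length - 1) by omega,
      glue_clause_mid (by omega)]
    exact hl2

lemma glue_mergeres (hv1 : π1.Valid Ax) (hv2 : π2.Valid Ax)
    (hm1 : π1.MergeRes) (hm2 : π2.MergeRes) (hg : goodD π1 ∨ goodD π2) :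
    (glue π1 π2 x).MergeRes := by
  have hL1 := hv1.1
  have hL2 := hv2.1
  intro k i j y hj
  by_cases hk4 : π1.length + π2.length + 1 ≤ k
  · rw [just_eq_none_of_le (by rwa [glue_length])] at hj
    exact absurd hj (by simp)
  push_neg at hk4
  rcases Nat.lt_or_ge k π1.length with h1 | h1
  · rw [glue_just_lo h1] at hj
    have hvl := hv1.2 k h1
    unfold Deriv.ValidLine at hvl
    rw [hj] at hvl
    rcases hm1 k i j y hj with h | h
    · rcases h with h | h
      · exact Or.inl (Or.inl (by rw [glue_just_lo (by omega)]; exact h))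
      · exact Or.inl (Or.inr (merge_lo hv1 h))
    · rcases h with h | h
      · exact Or.inr (Or.inl (by rw [glue_just_lo (by omega)]; exact h))
      · exact Or.inr (Or.inr (merge_lo hv1 h))
  rcases Nat.lt_or_ge k (π1.length + π2.length) with h2 | h2
  · obtain ⟨k0, rfl⟩ : ∃ k0, k = π1.length + k0 := ⟨k - π1.length, by omega⟩
    have hk0 : k0 < π2.length := by omega
    rw [glue_just_mid hk0] at hj
    cases hj0 : π2.just k0 with
    | none => rw [hj0] at hj; exact absurd hj (by simp)
    | some js =>
      rw [hj0] at hj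
      cases js with
      | inr m => simp [shiftJ] at hj
      | inl t3 =>
        obtain ⟨i0, j0, y0⟩ := t3
        simp only [Option.map_some, shiftJ, Option.some.injEq, Sum.inl.injEq,
          Prod.mk.injEq] at hj
        obtain ⟨hi0, hj0', hy0⟩ := hj
        have hvl := hv2.2 k0 hk0
        unfold Deriv.ValidLine at hvl
        rw [hj0] at hvl
        obtain ⟨hik, hjk, -, -, -⟩ := hvl
        rcases hm2 k0 i0 j0 y0 hj0 with h | h
        · refine Or.inl ?_
          rw [← hi0, Nat.add_comm i0 π1.length]
          rcases h with h | h
          · exact Or.inl (by rw [glue_just_mid (by omega), h]; rfl)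
          · exact Or.inr (merge_mid hv2 h)
        · refine Or.inr ?_
          rw [← hj0', Nat.add_comm j0 π1.length]
          rcases h with h | h
          · exact Or.inl (by rw [glue_just_mid (by omega), h]; rfl)
          · exact Or.inr (merge_mid hv2 h)
  have h3 : k = π1.length + π2.length := by omega
  subst h3
  rw [glue_just_last] at hj
  simp only [Option.some.injEq, Sum.inl.injEq, Prod.mk.injEq] at hj
  obtain ⟨hi, hjj, hy⟩ := hj
  rcases hg with h | h
  · refine Or.inl ?_
    rw [← hi]
    rcases h with h | h
    · exact Or.inl (by rw [glue_just_lo (by omega)]; exact h)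
    · exact Or.inr (merge_lo hv1 h)
  · refine Or.inr ?_
    rw [← hjj, show π1.length + π2.length - 1 = π1.length + (π2.length - 1) by omega]
    rcases h with h | h
    · exact Or.inl (by rw [glue_just_mid (by omega), show π2.length - 1 = π2.length - 1 from rfl, h]; rfl)
    · exact Or.inr (merge_mid hv2 h)

def toDeriv : PT V → Deriv V
  | .ax C => ⟨[(C, none)]⟩
  | .res a b x => glue (toDeriv a) (toDeriv b) x

lemma toDeriv_spec (Ax : Set (Clause V)) :
    ∀ t : PT V, t.valid Ax →
      (toDeriv t).Valid Ax ∧ (toDeriv t).TreeLike ∧ (toDeriv t).length = t.size ∧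
      (toDeriv t).lastClause = t.clause ∧ (t.good → goodD (toDeriv t)) ∧
      (t.mres → (toDeriv t).MergeRes) := by
  intro t
  induction t with
  | ax C =>
    intro hv
    have hnone : ∀ k, (toDeriv (PT.ax C : PT V)).just k = none := by
      intro k
      match k with
      | 0 => rfl
      | (n+1) => rfl
    have hnp : ∀ a k, ¬ (toDeriv (PT.ax C : PT V)).IsParent a k := by
      rintro a k (⟨j, y, h | h⟩ | h) <;> rw [hnone k] at h <;> exact absurd h (by simp)
    refine ⟨⟨by simp [toDeriv, Deriv.length], ?_⟩, ?_, ?_, ?_, ?_, ?_⟩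
    · intro k hk
      simp [toDeriv, Deriv.length] at hk
      subst hk
      unfold Deriv.ValidLine
      rw [hnone 0]
      exact hv
    · exact fun a k1 k2 hp _ => absurd hp (hnp a k1)
    · simp [toDeriv, Deriv.length, PT.size]
    · rfl
    · exact fun _ => Or.inl (hnone _)
    · intro _ k i j y h
      rw [hnone k] at h
      exact absurd h (by simp)
  | res a b y IHa IHb =>
    rintro ⟨hva, hvb, hxa, hxb⟩
    obtain ⟨va, ta, la, ca, ga, ma⟩ := IHa hva
    obtain ⟨vb, tb, lb, cb, gb, mb⟩ := IHb hvb
    have hxa' : (y, true) ∈ (toDeriv a).lastClause := by rw [ca]; exact hxa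
    have hxb' : (y, false) ∈ (toDeriv b).lastClause := by rw [cb]; exact hxb
    refine ⟨glue_valid va vb hxa' hxb', glue_treelike va vb ta tb, ?_, ?_, ?_, ?_⟩
    · show (glue (toDeriv a) (toDeriv b) y).length = _
      rw [glue_length, la, lb]
      rfl
    · show (glue (toDeriv a) (toDeriv b) y).lastClause = _
      rw [glue_lastClause, ca, cb]
      rfl
    · intro hg
      right
      show (glue (toDeriv a) (toDeriv b) y).IsMergeLine ((glue (toDeriv a) (toDeriv b) y).length - 1)
      rw [glue_length]
      simp only [Nat.add_sub_cancel]
      refine merge_last va vb ?_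
      rw [ca, cb]
      exact hg
    · rintro ⟨hma, hmb, hgab⟩
      exact glue_mergeres va vb (ma hma) (mb hmb) (hgab.imp ga gb)

end ConvPart

/-- a tree-like derivation of `C` of length `L` can be turned into a
tree-like merge resolution derivation of some `C' ⊆ C` of length ≤ `L`. -/
theorem stmt4 {V : Type} [DecidableEq V] (Ax : Set (Clause V)) (π : Deriv V)
    (C : Clause V) (L : ℕ) (hv : π.Valid Ax) (ht : π.TreeLike)
    (hC : π.lastClause = C) (hL : π.length = L) :
    ∃ C' ⊆ C, ∃ π' : Deriv V, π'.Valid Ax ∧ π'.TreeLike ∧ π'.MergeRes ∧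
      π'.lastClause = C' ∧ π'.length ≤ L := by
  have hpos := hv.1
  obtain ⟨t, hvt, hct, hst⟩ := extractPT hv ht (π.length - 1) (by omega)
  obtain ⟨t', hvt', hmt', hct', hst'⟩ := ptMain t hvt
  obtain ⟨vd, td, ld, cd, -, md⟩ := toDeriv_spec Ax t' hvt'
  refine ⟨t'.clause, ?_, toDeriv t', vd, td, md hmt', cd, ?_⟩
  · exact (hct'.trans hct).trans (by rw [← hC]; exact Finset.Subset.refl _)
  · have hanc := anc_card_le π (π.length - 1)
    omega
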